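/- Let W = ⟨S|M⟩ be a finite rank Coxeter system and let x = (x_1,…,x_n) ∈ [0,∞)^n satisfy x_i = x_j whenever C_i = C_j. Then the weighted word length ψ_x : W → [0,∞) is conditionally of negative type: ψ_x(e) = 0, ψ_x(w) = ψ_x(w⁻¹) for all w ∈ W, and for all g_1,…,g_m ∈ W and real numbers c_1,…,c_m with Σ_i c_i = 0 one has Σ_{i,j=1}^m c_i c_j ψ_x(g_j⁻¹ g_i) ≤ 0. -/

import Mathlib

open CoxeterSystem

/-- A function `ψ` on a group is conditionally of negative type if `ψ(e) = 0`,
`ψ(g) = ψ(g⁻¹)`, and `∑ᵢⱼ cᵢcⱼ ψ(gⱼ⁻¹gᵢ) ≤ 0` whenever `∑ᵢ cᵢ = 0`. -/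
def IsCondNegType {G : Type*} [Group G] (ψ : G → ℝ) : Prop :=
  ψ 1 = 0 ∧ (∀ g : G, ψ g⁻¹ = ψ g) ∧
    ∀ (m : ℕ) (g : Fin m → G) (c : Fin m → ℝ), (∑ i, c i) = 0 →
      ∑ i, ∑ j, c i * c j * ψ ((g j)⁻¹ * g i) ≤ 0

/-- The graph `Graph'_S(W)` on the generators, with an edge `{s_i, s_j}` whenever
`3 ≤ m_{i,j} < ∞` (in the `CoxeterMatrix` encoding `0` stands for `∞`, so this is
`3 ≤ M i j`). -/
def finGraph {B : Type*} (M : CoxeterMatrix B) : SimpleGraph B where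
  Adj x y := x ≠ y ∧ 3 ≤ M x y
  symm := by
    constructor
    intro x y h
    exact ⟨h.1.symm, M.symmetric x y ▸ h.2⟩
  loopless := by
    constructor
    intro x h
    exact h.1 rfl

open CoxeterSystem List

namespace BJSAux

attribute [local instance] Classical.propDecidable

variable {B : Type*} {W : Type*} [Group W] {M : CoxeterMatrix B} (cs : CoxeterSystem M W)

/-- The Bourbaki sign-action involution attached to a generator. -/
noncomputable def sigmaFun (i : B) : W × ℤˣ → W × ℤˣ :=
  fun p => (cs.simple i * p.1 * cs.simple i,
    if p.1 = cs.simple i then -p.2 else p.2)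

lemma simple_conj_eq_simple_iff (i : B) (w : W) :
    (cs.simple i * w * cs.simple i = cs.simple i) ↔ w = cs.simple i := by
  constructor
  · intro h
    have := congrArg (fun z => cs.simple i * z * cs.simple i) h
    rw [← mul_assoc, ← mul_assoc, cs.simple_mul_simple_self, one_mul, mul_assoc,
      cs.simple_mul_simple_self, mul_one, one_mul] at this
    exact this
  · intro h
    rw [h, mul_assoc, cs.simple_mul_simple_self, mul_one]

lemma sigmaFun_involutive (i : B) : Function.Involutive (sigmaFun cs i) := by
  intro p
  simp only [sigmaFun]
  have h1 : cs.simple i * (cs.simple i * p.1 * cs.simple i) * cs.simple i = p.1 := by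
    rw [← mul_assoc, ← mul_assoc, cs.simple_mul_simple_self, one_mul, mul_assoc,
      cs.simple_mul_simple_self, mul_one]
  have h2 := simple_conj_eq_simple_iff cs i p.1
  by_cases hp : p.1 = cs.simple i
  · simp [hp, h1, h2, Prod.ext_iff, cs.simple_mul_simple_self, mul_assoc]
  · simp [hp, h1, h2, Prod.ext_iff]

/-- The sign-action permutation of a generator. -/
noncomputable def sigma (i : B) : Equiv.Perm (W × ℤˣ) := (sigmaFun_involutive cs i).toPerm

lemma sigma_apply (i : B) (p : W × ℤˣ) :
    sigma cs i p = (cs.simple i * p.1 * cs.simple i,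
      if p.1 = cs.simple i then -p.2 else p.2) := rfl

end BJSAux

namespace BJSAux

attribute [local instance] Classical.propDecidable

variable {B : Type*} {W : Type*} [Group W] {M : CoxeterMatrix B} (cs : CoxeterSystem M W)

lemma conj_eq_iff (g a b : W) : g * a * g⁻¹ = b ↔ a = g⁻¹ * b * g := by
  constructor
  · intro h; rw [← h]; group
  · intro h; rw [h]; group

lemma hswap (i j : B) : ∀ n : ℕ,
    cs.simple j * (cs.simple i * cs.simple j) ^ n
      = (cs.simple j * cs.simple i) ^ n * cs.simple j := by
  intro n
  induction n with
  | zero => simp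
  | succ n ih =>
    rw [pow_succ, ← mul_assoc, ih, pow_succ]
    have : cs.simple j * (cs.simple i * cs.simple j)
        = (cs.simple j * cs.simple i) * cs.simple j := by group
    rw [mul_assoc, this]
    group

lemma conj_simple_eq_iff (j : B) (a b : W) :
    cs.simple j * a * cs.simple j = b ↔ a = cs.simple j * b * cs.simple j := by
  have h := conj_eq_iff (cs.simple j) a b
  rw [cs.inv_simple] at h
  exact h

lemma sigma_pair_pow (i j : B) (m : ℕ) (t : W) (ε : ℤˣ) :
    ((sigma cs i * sigma cs j) ^ m) (t, ε) =
      ((cs.simple i * cs.simple j) ^ m * t * ((cs.simple i * cs.simple j) ^ m)⁻¹,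
        (∏ e ∈ Finset.range (2 * m),
          if (cs.simple j * cs.simple i) ^ e * cs.simple j = t then (-1 : ℤˣ) else 1) * ε) := by
  have hpinv : ∀ n : ℕ, ((cs.simple i * cs.simple j) ^ n)⁻¹ = (cs.simple j * cs.simple i) ^ n := by
    intro n
    rw [← inv_pow, mul_inv_rev, cs.inv_simple, cs.inv_simple]
  induction m with
  | zero => simp
  | succ m ih =>
    rw [pow_succ' (sigma cs i * sigma cs j) m, Equiv.Perm.mul_apply, ih, Equiv.Perm.mul_apply,
      sigma_apply, sigma_apply]
    simp only
    set si := cs.simple i with hsi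
    set sj := cs.simple j with hsj
    set X := (si * sj) ^ m * t * ((si * sj) ^ m)⁻¹ with hX
    set P : ℤˣ := (∏ e ∈ Finset.range (2 * m),
          if (sj * si) ^ e * sj = t then (-1 : ℤˣ) else 1) with hP
    have hconj1 : ((si * sj) ^ m)⁻¹ * sj * (si * sj) ^ m = (sj * si) ^ (2 * m) * sj := by
      rw [hpinv, mul_assoc, hswap cs i j m, ← mul_assoc, ← pow_add, two_mul]
    have hconj2 : ((si * sj) ^ m)⁻¹ * (sj * (si * sj)) * (si * sj) ^ m
        = (sj * si) ^ (2 * m + 1) * sj := by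
      rw [hpinv, mul_assoc _ (sj * (si * sj)) _, mul_assoc sj (si*sj) _, ← pow_succ',
        hswap cs i j (m+1), ← mul_assoc, ← pow_add]
      congr 2
      omega
    have e1 : (X = sj) ↔ ((sj * si) ^ (2*m) * sj = t) := by
      rw [hX, conj_eq_iff, hconj1, eq_comm]
    have e2 : (sj * X * sj = si) ↔ ((sj * si) ^ (2*m+1) * sj = t) := by
      rw [conj_simple_eq_iff cs j X si, hX, conj_eq_iff]
      rw [show ((si * sj) ^ m)⁻¹ * (sj * si * sj) * (si * sj) ^ m
          = ((si * sj) ^ m)⁻¹ * (sj * (si * sj)) * (si * sj) ^ m by group]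
      rw [hconj2, eq_comm]
    have hfst : si * (sj * X * sj) * si = (si * sj) ^ (m+1) * t * ((si * sj) ^ (m+1))⁻¹ := by
      rw [hX, pow_succ' (si * sj) m, mul_inv_rev ((si*sj)) ((si*sj)^m),
        mul_inv_rev si sj, cs.inv_simple, cs.inv_simple, ← hsi, ← hsj]
      group
    have hprod : (∏ e ∈ Finset.range (2 * (m+1)),
          if (sj * si) ^ e * sj = t then (-1 : ℤˣ) else 1)
        = P * (if (sj * si) ^ (2*m) * sj = t then (-1 : ℤˣ) else 1)
            * (if (sj * si) ^ (2*m+1) * sj = t then (-1 : ℤˣ) else 1) := by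
      rw [show 2 * (m+1) = (2*m + 1) + 1 by omega, Finset.prod_range_succ,
        Finset.prod_range_succ]
    rw [hprod]
    refine Prod.ext hfst ?_
    simp only
    by_cases h1 : X = sj <;> by_cases h2 : sj * X * sj = si
    · rw [if_pos h1, if_pos h2, if_pos (e1.mp h1), if_pos (e2.mp h2)]
      simp [mul_neg, neg_mul, neg_neg]
    · rw [if_pos h1, if_neg h2, if_pos (e1.mp h1), if_neg (fun hc => h2 (e2.mpr hc))]
      simp [mul_neg, neg_mul, neg_neg]
    · rw [if_neg h1, if_pos h2, if_neg (fun hc => h1 (e1.mpr hc)), if_pos (e2.mp h2)]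
      simp [mul_neg, neg_mul, neg_neg]
    · rw [if_neg h1, if_neg h2, if_neg (fun hc => h1 (e1.mpr hc)),
        if_neg (fun hc => h2 (e2.mpr hc))]
      simp [mul_neg, neg_mul, neg_neg]

lemma sigma_liftable : M.IsLiftable (fun i => sigma cs i) := by
  intro i j
  apply Equiv.ext
  rintro ⟨t, ε⟩
  rw [sigma_pair_pow cs i j (M i j) t ε]
  rw [cs.simple_mul_simple_pow i j]
  have h2 : ∀ e : ℕ, (cs.simple j * cs.simple i) ^ (M i j + e) = (cs.simple j * cs.simple i) ^ e := by
    intro e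
    rw [pow_add, cs.simple_mul_simple_pow' i j, one_mul]
  have hprod : (∏ e ∈ Finset.range (2 * M i j),
      if (cs.simple j * cs.simple i) ^ e * cs.simple j = t then (-1 : ℤˣ) else 1) = 1 := by
    rw [two_mul, Finset.prod_range_add]
    simp only [h2]
    exact Int.units_mul_self _
  rw [hprod]
  simp

/-- The Bourbaki sign action as a homomorphism `W →* Perm (W × ℤˣ)`. -/
noncomputable def theta : W →* Equiv.Perm (W × ℤˣ) :=
  cs.lift ⟨fun i => sigma cs i, sigma_liftable cs⟩

lemma theta_simple (i : B) : theta cs (cs.simple i) = sigma cs i :=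
  cs.lift_apply_simple (sigma_liftable cs) i

/-- `eta cs w t = -1` iff `t` belongs to the (left-)inversion set of `w⁻¹`. -/
noncomputable def eta (w t : W) : ℤˣ := ((theta cs w) (t, 1)).2

lemma theta_apply (w : W) : ∀ (t : W) (ε : ℤˣ),
    theta cs w (t, ε) = (w * t * w⁻¹, eta cs w t * ε) := by
  induction w using cs.simple_induction_left with
  | one =>
    intro t ε
    simp [eta, theta]
  | mul_simple_left w i ih =>
    intro t ε
    have h : theta cs (cs.simple i * w) = theta cs (cs.simple i) * theta cs w := map_mul _ _ _
    rw [h, Equiv.Perm.mul_apply, ih t ε, theta_simple, sigma_apply]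
    have h1 : theta cs (cs.simple i * w) (t, 1) =
        (cs.simple i * (w * t * w⁻¹) * cs.simple i,
          if w * t * w⁻¹ = cs.simple i then -(eta cs w t * 1) else eta cs w t * 1) := by
      rw [h, Equiv.Perm.mul_apply, ih t 1, theta_simple, sigma_apply]
    have heta : eta cs (cs.simple i * w) t =
        (if w * t * w⁻¹ = cs.simple i then -(eta cs w t) else eta cs w t) := by
      rw [eta, h1]
      by_cases hc : w * t * w⁻¹ = cs.simple i <;> simp [hc]
    have hfst : cs.simple i * (w * t * w⁻¹) * cs.simple i
        = (cs.simple i * w) * t * (cs.simple i * w)⁻¹ := by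
      rw [mul_inv_rev, cs.inv_simple]
      group
    refine Prod.ext ?_ ?_
    · exact hfst
    · simp only [heta]
      by_cases hc : w * t * w⁻¹ = cs.simple i <;> simp [hc, neg_mul]

lemma eta_mul (u v t : W) : eta cs (u * v) t = eta cs v t * eta cs u (v * t * v⁻¹) := by
  have : theta cs (u * v) (t, 1) = theta cs u (theta cs v (t, 1)) := by
    rw [map_mul]; rfl
  rw [eta, this, theta_apply cs v t 1, theta_apply cs u (v * t * v⁻¹) (eta cs v t * 1)]
  simp [mul_comm]

@[simp] lemma eta_one (t : W) : eta cs 1 t = 1 := by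
  simp [eta]

lemma eta_inv (u t : W) : eta cs u⁻¹ t = eta cs u (u⁻¹ * t * u) := by
  have h := eta_mul cs u u⁻¹ t
  rw [mul_inv_cancel, eta_one, inv_inv] at h
  calc eta cs u⁻¹ t
      = eta cs u⁻¹ t * (eta cs u (u⁻¹*t*u) * eta cs u (u⁻¹*t*u)) := by
        rw [Int.units_mul_self, mul_one]
    _ = (eta cs u⁻¹ t * eta cs u (u⁻¹*t*u)) * eta cs u (u⁻¹*t*u) := by rw [← mul_assoc]
    _ = eta cs u (u⁻¹*t*u) := by rw [← h, one_mul]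

lemma ris_cons (i : B) (ω : List B) :
    cs.rightInvSeq (i :: ω)
      = ((cs.wordProd ω)⁻¹ * cs.simple i * cs.wordProd ω) :: cs.rightInvSeq ω := rfl

lemma eta_simple_mul (i : B) (w t : W) :
    eta cs (cs.simple i * w) t
      = (if t = w⁻¹ * cs.simple i * w then (-1 : ℤˣ) else 1) * eta cs w t := by
  have h : theta cs (cs.simple i * w) (t, 1) = sigma cs i (theta cs w (t, 1)) := by
    rw [map_mul, theta_simple]; rfl
  rw [eta, h, theta_apply cs w t 1, sigma_apply]
  have hiff : (w * t * w⁻¹ = cs.simple i) ↔ (t = w⁻¹ * cs.simple i * w) := conj_eq_iff w t _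
  by_cases hc : t = w⁻¹ * cs.simple i * w
  · rw [if_pos (hiff.mpr hc)]
    simp [hc, eta]
  · rw [if_neg (fun hx => hc (hiff.mp hx))]
    simp [eta, hc]

lemma neg_one_ne_one : (-1 : ℤˣ) ≠ 1 := by decide

lemma eta_eq_neg_one_iff_mem : ∀ (ω : List B), (cs.rightInvSeq ω).Nodup → ∀ t : W,
    (eta cs (cs.wordProd ω) t = -1 ↔ t ∈ cs.rightInvSeq ω) := by
  intro ω
  induction ω with
  | nil =>
    intro _ t
    simp only [rightInvSeq_nil, List.not_mem_nil, iff_false, wordProd_nil, eta_one]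
    exact fun h => neg_one_ne_one h.symm
  | cons i ω ih =>
    intro hnd t
    rw [ris_cons] at hnd ⊢
    obtain ⟨hr0, hnd'⟩ := List.nodup_cons.mp hnd
    rw [cs.wordProd_cons, eta_simple_mul, List.mem_cons]
    set r0 := (cs.wordProd ω)⁻¹ * cs.simple i * cs.wordProd ω
    by_cases hc : t = r0
    · rw [if_pos hc, hc]
      have : eta cs (cs.wordProd ω) r0 = 1 := by
        rcases Int.units_eq_one_or (eta cs (cs.wordProd ω) r0) with h | h
        · exact h
        · exact absurd ((ih hnd' r0).mp h) hr0
      rw [this, mul_one]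
      simp
    · rw [if_neg hc, one_mul, ih hnd' t]
      constructor
      · exact fun h => Or.inr h
      · rintro (h | h)
        · exact absurd h hc
        · exact h

/-- Indices are related if their Coxeter matrix entry is odd. -/
def oddRel (M : CoxeterMatrix B) : B → B → Prop := fun i j => Odd (M i j)

lemma char_two_add_self (v : Quot (oddRel M) → ZMod 2) : v + v = 0 := by
  funext q
  have h : ∀ a : ZMod 2, a + a = 0 := by decide
  exact h (v q)

/-- Counting (mod 2) occurrences of letters from each odd-class. -/
noncomputable def parFun (M : CoxeterMatrix B) : B → Multiplicative (Quot (oddRel M) → ZMod 2) :=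
  fun i => Multiplicative.ofAdd (Pi.single (Quot.mk (oddRel M) i) 1)

lemma parFun_liftable : M.IsLiftable (parFun M) := by
  intro i j
  rw [parFun, parFun, ← ofAdd_add, ← ofAdd_nsmul]
  rw [show (1 : Multiplicative (Quot (oddRel M) → ZMod 2)) = Multiplicative.ofAdd 0 from rfl]
  congr 1
  rcases Nat.even_or_odd (M i j) with he | ho
  · obtain ⟨k, hk⟩ := he
    rw [hk, add_nsmul]
    exact char_two_add_self _
  · have hq : Quot.mk (oddRel M) i = Quot.mk (oddRel M) j := Quot.sound ho
    rw [hq, char_two_add_self, smul_zero]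

/-- The parity homomorphism. -/
noncomputable def parHom : W →* Multiplicative (Quot (oddRel M) → ZMod 2) :=
  cs.lift ⟨parFun M, parFun_liftable⟩

lemma parHom_simple (i : B) : parHom cs (cs.simple i) = parFun M i :=
  cs.lift_apply_simple (parFun_liftable) i

lemma parHom_conj (u t : W) : parHom cs (u * t * u⁻¹) = parHom cs t := by
  rw [map_mul, map_mul, map_inv, mul_comm (parHom cs u) (parHom cs t), mul_assoc,
    mul_inv_cancel, mul_one]

lemma parFun_inj (i j : B) (h : parFun M i = parFun M j) :
    Relation.EqvGen (oddRel M) i j := by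
  have h2 : (Pi.single (M := fun _ : Quot (oddRel M) => ZMod 2) (Quot.mk (oddRel M) i) 1)
      = Pi.single (M := fun _ : Quot (oddRel M) => ZMod 2) (Quot.mk (oddRel M) j) 1 :=
    Multiplicative.ofAdd.injective h
  have h3 := congrFun h2 (Quot.mk (oddRel M) i)
  rw [Pi.single_eq_same] at h3
  by_cases hc : Quot.mk (oddRel M) j = Quot.mk (oddRel M) i
  · exact Quot.eqvGen_exact hc.symm
  · have h4 : (Pi.single (M := fun _ : Quot (oddRel M) => ZMod 2) (Quot.mk (oddRel M) j) 1)
        (Quot.mk (oddRel M) i) = 0 :=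
      Pi.single_eq_of_ne (fun hx => hc hx.symm) 1
    exact absurd (h3.trans h4).symm zero_ne_one

/-- The conjugation-invariant weight on reflections. -/
noncomputable def mu (x : B → ℝ) : W → ℝ :=
  fun w => if h : ∃ i, parHom cs w = parHom cs (cs.simple i) then x h.choose else 0

lemma mu_nonneg (x : B → ℝ) (hx : ∀ i, 0 ≤ x i) (w : W) : 0 ≤ mu cs x w := by
  rw [mu]
  split
  · exact hx _
  · exact le_refl 0

lemma mu_conj (x : B → ℝ) (u t : W) : mu cs x (u * t * u⁻¹) = mu cs x t := by
  simp only [mu, parHom_conj]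

lemma mu_simple (x : B → ℝ)
    (hsim : ∀ i j : B, Relation.EqvGen (oddRel M) i j → x i = x j) (i : B) :
    mu cs x (cs.simple i) = x i := by
  rw [mu]
  have hex : ∃ j, parHom cs (cs.simple i) = parHom cs (cs.simple j) := ⟨i, rfl⟩
  rw [dif_pos hex]
  have hspec := hex.choose_spec
  have h2 : parFun M i = parFun M hex.choose := by
    rw [← parHom_simple cs i, ← parHom_simple cs hex.choose]
    exact hspec
  exact (hsim i hex.choose (parFun_inj i hex.choose h2)).symm

lemma sum_map_mu_ris (x : B → ℝ)
    (hsim : ∀ i j : B, Relation.EqvGen (oddRel M) i j → x i = x j) :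
    ∀ ω : List B, ((cs.rightInvSeq ω).map (mu cs x)).sum = (ω.map x).sum := by
  intro ω
  induction ω with
  | nil => simp
  | cons i ω ih =>
    rw [ris_cons, List.map_cons, List.map_cons, List.sum_cons, List.sum_cons, ih]
    congr 1
    have : (cs.wordProd ω)⁻¹ * cs.simple i * cs.wordProd ω
        = (cs.wordProd ω)⁻¹ * cs.simple i * ((cs.wordProd ω)⁻¹)⁻¹ := by rw [inv_inv]
    rw [this, mu_conj, mu_simple cs x hsim]

lemma sum_map_eq_sum_count [Fintype B] [DecidableEq B] (x : B → ℝ) (ω : List B) :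
    (ω.map x).sum = ∑ i : B, x i * (ω.count i : ℝ) := by
  induction ω with
  | nil => simp
  | cons j ω ih =>
    rw [List.map_cons, List.sum_cons, ih]
    have hcount : ∀ i : B, ((j :: ω).count i : ℝ) = (ω.count i : ℝ) + (if i = j then 1 else 0) := by
      intro i
      rw [List.count_cons]
      by_cases h : i = j
      · simp [h]
      · have h2 : ¬ j = i := fun hx => h hx.symm
        simp [h, h2]
    simp only [hcount, mul_add]
    rw [Finset.sum_add_distrib]
    have : ∑ i : B, x i * (if i = j then (1:ℝ) else 0) = x j := by
      rw [Finset.sum_congr rfl (fun i _ => by rw [mul_ite, mul_one, mul_zero])]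
      rw [Finset.sum_ite_eq' Finset.univ j x]
      simp
    rw [this]
    ring

/-- The inversion `Finset` of `w` (computed from a chosen reduced word of `w⁻¹`). -/
noncomputable def invSet (w : W) : Finset W :=
  (cs.rightInvSeq (cs.exists_reduced_word' w⁻¹).choose).toFinset

lemma mem_invSet (w t : W) : t ∈ invSet cs w ↔ eta cs w⁻¹ t = -1 := by
  rw [invSet, List.mem_toFinset]
  obtain ⟨hred, hw⟩ := (cs.exists_reduced_word' w⁻¹).choose_spec
  conv_rhs => rw [hw]
  exact (eta_eq_neg_one_iff_mem cs _ (hred.nodup_rightInvSeq) t).symm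

lemma sum_invSet (x : B → ℝ)
    (hsim : ∀ i j : B, Relation.EqvGen (oddRel M) i j → x i = x j) (w : W) :
    ∑ t ∈ invSet cs w, mu cs x t
      = (((cs.exists_reduced_word' w⁻¹).choose).map x).sum := by
  rw [invSet, List.sum_toFinset _ ((cs.exists_reduced_word' w⁻¹).choose_spec.1.nodup_rightInvSeq)]
  exact sum_map_mu_ris cs x hsim _

lemma mem_invSet_conj (a b t : W) :
    (b⁻¹ * t * b ∈ invSet cs (b⁻¹ * a)) ↔ ¬ ((t ∈ invSet cs a) ↔ (t ∈ invSet cs b)) := by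
  rw [mem_invSet, mem_invSet, mem_invSet]
  have h1 : (b⁻¹ * a)⁻¹ = a⁻¹ * b := by rw [mul_inv_rev, inv_inv]
  rw [h1]
  have e0 : b * (b⁻¹ * t * b) * b⁻¹ = t := by group
  rw [eta_mul cs a⁻¹ b (b⁻¹ * t * b), e0, ← eta_inv cs b t]
  rcases Int.units_eq_one_or (eta cs b⁻¹ t) with h | h <;>
    rcases Int.units_eq_one_or (eta cs a⁻¹ t) with h' | h' <;>
      simp only [h, h'] <;> decide

end BJSAux
/-- Let `W = ⟨S|M⟩` be a finite rank Coxeter system and let the weights `x_i ≥ 0` satisfy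
`x_i = x_j` whenever `s_i` and `s_j` lie in the same connected component of `Graph'_S(W)`.
Then the weighted word length `ψ_x` (defined on reduced expressions by
`ψ_x(w) = Σ_i x_i·#{l : w_l = s_i}`) is conditionally of negative type: `ψ_x(e) = 0`,
`ψ_x(w) = ψ_x(w⁻¹)`, and `Σ_{i,j} c_i c_j ψ_x(g_j⁻¹ g_i) ≤ 0` whenever `Σ_i c_i = 0`. -/

theorem weighted_length_isCondNegType
    {B : Type*} [Fintype B] [DecidableEq B] {M : CoxeterMatrix B}
    {W : Type*} [Group W] (cs : CoxeterSystem M W)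
    (x : B → ℝ) (hx : ∀ i : B, 0 ≤ x i)
    (hcomp : ∀ i j : B, (finGraph M).Reachable i j → x i = x j)
    (ψ : W → ℝ)
    (hψ : ∀ ω : List B, cs.IsReduced ω →
      ψ (cs.wordProd ω) = ∑ i : B, x i * (ω.count i : ℝ)) :
    IsCondNegType ψ := by
  classical
  -- `x` is constant on odd-equivalence classes
  have hodd : ∀ i j : B, BJSAux.oddRel M i j → x i = x j := by
    intro i j h
    by_cases hij : i = j
    · rw [hij]
    · by_cases h3 : 3 ≤ M i j
      · exact hcomp i j (SimpleGraph.Adj.reachable ⟨hij, h3⟩)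
      · have h1 : M i j = 1 := by
          obtain ⟨k, hk⟩ := h
          omega
        have hs : cs.simple i = cs.simple j := by
          have hp := cs.simple_mul_simple_pow i j
          rw [h1, pow_one] at hp
          have h2 := eq_inv_of_mul_eq_one_left hp
          rwa [cs.inv_simple] at h2
        have hred : ∀ k : B, cs.IsReduced [k] := by
          intro k
          have : cs.length (cs.wordProd [k]) = 1 := by
            rw [cs.wordProd_singleton]
            exact cs.length_simple k
          simp only [CoxeterSystem.IsReduced, List.length_singleton]
          exact this
        have hi := hψ [i] (hred i)
        have hj := hψ [j] (hred j)
        rw [cs.wordProd_singleton, ← BJSAux.sum_map_eq_sum_count] at hi hj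
        simp only [List.map_cons, List.map_nil, List.sum_cons, List.sum_nil, add_zero] at hi hj
        rw [hs] at hi
        rw [hi] at hj
        exact hj
  have hsim : ∀ i j : B, Relation.EqvGen (BJSAux.oddRel M) i j → x i = x j := by
    intro i j h
    induction h with
    | rel a b hab => exact hodd a b hab
    | refl a => rfl
    | symm a b _ ih => exact ih.symm
    | trans a b d _ _ ih1 ih2 => exact ih1.trans ih2
  have hpsi_one : ψ 1 = 0 := by
    have h := hψ [] (by simp [CoxeterSystem.IsReduced])
    simpa using h
  have hpsi_inv : ∀ w : W, ψ w⁻¹ = ψ w := by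
    intro w
    obtain ⟨ω, hred, hw⟩ := cs.exists_reduced_word' w
    rw [hw, ← cs.wordProd_reverse, hψ ω.reverse ((cs.isReduced_reverse_iff ω).mpr hred), hψ ω hred]
    refine Finset.sum_congr rfl fun i _ => ?_
    rw [(List.reverse_perm ω).count_eq i]
  refine ⟨hpsi_one, hpsi_inv, ?_⟩
  intro m g c hc
  have hsumE : ∀ w : W, ∑ t ∈ BJSAux.invSet cs w, BJSAux.mu cs x t = ψ w := by
    intro w
    rw [BJSAux.sum_invSet cs x hsim w, BJSAux.sum_map_eq_sum_count,
      ← hψ _ (cs.exists_reduced_word' w⁻¹).choose_spec.1,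
      ← (cs.exists_reduced_word' w⁻¹).choose_spec.2, hpsi_inv]
  set χ : Fin m → W → ℝ := fun k t => if t ∈ BJSAux.invSet cs (g k) then 1 else 0 with hχ
  set U : Finset W := Finset.univ.biUnion (fun k : Fin m => BJSAux.invSet cs (g k)) with hU
  have stepA : ∀ i j : Fin m, ψ ((g j)⁻¹ * g i)
      = ∑ t ∈ U, BJSAux.mu cs x t * (χ i t + χ j t - 2 * χ i t * χ j t) := by
    intro i j
    rw [← hsumE ((g j)⁻¹ * g i)]
    have hA1 : ∑ t0 ∈ BJSAux.invSet cs ((g j)⁻¹ * g i), BJSAux.mu cs x t0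
        = ∑ t ∈ U.filter
            (fun t => ¬ ((t ∈ BJSAux.invSet cs (g i)) ↔ (t ∈ BJSAux.invSet cs (g j)))),
            BJSAux.mu cs x t := by
      refine Finset.sum_nbij' (fun t0 => g j * t0 * (g j)⁻¹) (fun t => (g j)⁻¹ * t * g j)
        ?_ ?_ ?_ ?_ ?_
      · intro t0 ht0
        rw [Finset.mem_filter]
        have hx1 : (g j)⁻¹ * (g j * t0 * (g j)⁻¹) * (g j) = t0 := by group
        have hco := BJSAux.mem_invSet_conj cs (g i) (g j) (g j * t0 * (g j)⁻¹)
        rw [hx1] at hco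
        have hxor := hco.mp ht0
        constructor
        · rw [hU, Finset.mem_biUnion]
          by_cases hgi : g j * t0 * (g j)⁻¹ ∈ BJSAux.invSet cs (g i)
          · exact ⟨i, Finset.mem_univ i, hgi⟩
          · refine ⟨j, Finset.mem_univ j, ?_⟩
            by_contra hgj
            exact hxor (iff_of_false hgi hgj)
        · exact hxor
      · intro t ht
        rw [Finset.mem_filter] at ht
        exact (BJSAux.mem_invSet_conj cs (g i) (g j) t).mpr ht.2
      · intro t0 _
        group
      · intro t _
        group
      · intro t0 _
        exact (BJSAux.mu_conj cs x (g j) t0).symm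
    rw [hA1, Finset.sum_filter]
    refine Finset.sum_congr rfl fun t _ => ?_
    have hv1 : ∀ k : Fin m, t ∈ BJSAux.invSet cs (g k) → χ k t = 1 := by
      intro k hm
      simp [hχ, hm]
    have hv0 : ∀ k : Fin m, t ∉ BJSAux.invSet cs (g k) → χ k t = 0 := by
      intro k hm
      simp [hχ, hm]
    by_cases h1 : t ∈ BJSAux.invSet cs (g i) <;> by_cases h2 : t ∈ BJSAux.invSet cs (g j)
    · rw [hv1 i h1, hv1 j h2, if_neg (fun hcon => hcon (iff_of_true h1 h2))]
      ring
    · rw [hv1 i h1, hv0 j h2, if_pos (fun hiff => h2 (hiff.mp h1))]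
      ring
    · rw [hv0 i h1, hv1 j h2, if_pos (fun hiff => h1 (hiff.mpr h2))]
      ring
    · rw [hv0 i h1, hv0 j h2, if_neg (fun hcon => hcon (iff_of_false h1 h2))]
      ring
  have key : ∀ t : W, ∑ i : Fin m, ∑ j : Fin m,
      c i * c j * (BJSAux.mu cs x t * (χ i t + χ j t - 2 * χ i t * χ j t))
      = -2 * BJSAux.mu cs x t * (∑ i : Fin m, c i * χ i t)^2 := by
    intro t
    have hSC : (∑ i : Fin m, c i * χ i t) * (∑ j : Fin m, c j)
        = ∑ i : Fin m, ∑ j : Fin m, (c i * χ i t) * (c j) :=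
      Finset.sum_mul_sum _ _ _ _
    have hCS : (∑ i : Fin m, c i) * (∑ j : Fin m, c j * χ j t)
        = ∑ i : Fin m, ∑ j : Fin m, (c i) * (c j * χ j t) :=
      Finset.sum_mul_sum _ _ _ _
    have hSS : (∑ i : Fin m, c i * χ i t) * (∑ j : Fin m, c j * χ j t)
        = ∑ i : Fin m, ∑ j : Fin m, (c i * χ i t) * (c j * χ j t) :=
      Finset.sum_mul_sum _ _ _ _
    calc ∑ i : Fin m, ∑ j : Fin m,
        c i * c j * (BJSAux.mu cs x t * (χ i t + χ j t - 2 * χ i t * χ j t))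
        = ∑ i : Fin m, ∑ j : Fin m,
            (BJSAux.mu cs x t * ((c i * χ i t) * c j)
              + BJSAux.mu cs x t * (c i * (c j * χ j t))
              - 2 * BJSAux.mu cs x t * ((c i * χ i t) * (c j * χ j t))) :=
          Finset.sum_congr rfl fun i _ => Finset.sum_congr rfl fun j _ => by ring
      _ = BJSAux.mu cs x t * (∑ i : Fin m, ∑ j : Fin m, (c i * χ i t) * c j)
            + BJSAux.mu cs x t * (∑ i : Fin m, ∑ j : Fin m, c i * (c j * χ j t))
            - 2 * BJSAux.mu cs x t * (∑ i : Fin m, ∑ j : Fin m, (c i * χ i t) * (c j * χ j t)) := by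
          simp only [Finset.sum_add_distrib, Finset.sum_sub_distrib, ← Finset.mul_sum]
      _ = -2 * BJSAux.mu cs x t * (∑ i : Fin m, c i * χ i t)^2 := by
          rw [← hSC, ← hCS, ← hSS, hc]
          ring
  calc ∑ i : Fin m, ∑ j : Fin m, c i * c j * ψ ((g j)⁻¹ * g i)
      = ∑ i : Fin m, ∑ j : Fin m, ∑ t ∈ U,
          c i * c j * (BJSAux.mu cs x t * (χ i t + χ j t - 2 * χ i t * χ j t)) := by
        refine Finset.sum_congr rfl fun i _ => Finset.sum_congr rfl fun j _ => ?_
        rw [stepA i j, Finset.mul_sum]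
    _ = ∑ t ∈ U, ∑ i : Fin m, ∑ j : Fin m,
          c i * c j * (BJSAux.mu cs x t * (χ i t + χ j t - 2 * χ i t * χ j t)) := by
        rw [Finset.sum_congr rfl fun i (_ : i ∈ Finset.univ) => Finset.sum_comm]
        rw [Finset.sum_comm]
    _ = ∑ t ∈ U, -2 * BJSAux.mu cs x t * (∑ i : Fin m, c i * χ i t)^2 :=
        Finset.sum_congr rfl fun t _ => key t
    _ ≤ 0 := by
        refine Finset.sum_nonpos fun t _ => ?_
        nlinarith [BJSAux.mu_nonneg cs x hx t, sq_nonneg (∑ i : Fin m, c i * χ i t)]
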